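/- arXiv:0909.1596 — 3 statements merged into one kernel-verified Lean document; each statement's English description precedes it below -/
import Mathlib

section
/- A steady state ρ of the Lindblad generator is an extremal point of the convex set of steady states if and only if ρ is the unique steady state whose support is contained in supp(ρ); that is, ρ is extremal if and only if every steady state σ with supp(σ) ⊆ supp(ρ) satisfies σ = ρ. -/
open Matrix
open scoped ComplexOrder

/-- The Lindblad generator `𝓛(ρ) = -i[H,ρ] + Σ_d (V_d ρ V_d† - ½(V_d† V_d ρ + ρ V_d† V_d))`. -/
noncomputable def lindblad {n : Type*} [Fintype n] [DecidableEq n] {ι : Type*} [Fintype ι]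
    (H : Matrix n n ℂ) (V : ι → Matrix n n ℂ) (ρ : Matrix n n ℂ) : Matrix n n ℂ :=
  -Complex.I • (H * ρ - ρ * H) +
    ∑ d, (V d * ρ * (V d)ᴴ - (1 / 2 : ℂ) • ((V d)ᴴ * V d * ρ + ρ * ((V d)ᴴ * V d)))

/-- A density matrix: positive semidefinite with trace one. -/
def IsDensityMatrix {n : Type*} [Fintype n] (ρ : Matrix n n ℂ) : Prop :=
  ρ.PosSemidef ∧ ρ.trace = 1

/-- A steady state of the Lindblad dynamics. -/
noncomputable def IsSteadyState {n : Type*} [Fintype n] [DecidableEq n] {ι : Type*} [Fintype ι]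
    (H : Matrix n n ℂ) (V : ι → Matrix n n ℂ) (ρ : Matrix n n ℂ) : Prop :=
  IsDensityMatrix ρ ∧ lindblad H V ρ = 0

/-- The support of a matrix: its range as a linear map `ℂ^N → ℂ^N`. -/
noncomputable def matSupport {n : Type*} [Fintype n] (ρ : Matrix n n ℂ) :
    Submodule ℂ (n → ℂ) :=
  LinearMap.range ρ.mulVecLin

/-- An extremal steady state: it cannot be written as a nontrivial convex combination
of two steady states other than itself. -/
noncomputable def IsExtremalSteadyState {n : Type*} [Fintype n] [DecidableEq n]
    {ι : Type*} [Fintype ι]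
    (H : Matrix n n ℂ) (V : ι → Matrix n n ℂ) (ρ : Matrix n n ℂ) : Prop :=
  IsSteadyState H V ρ ∧
    ∀ (a : ℝ) (ρ₁ ρ₂ : Matrix n n ℂ), 0 < a → a < 1 →
      IsSteadyState H V ρ₁ → IsSteadyState H V ρ₂ →
      ρ = a • ρ₁ + (1 - a) • ρ₂ → ρ₁ = ρ ∧ ρ₂ = ρ

section Aux

lemma herm_dot {n : Type*} [Fintype n] {A : Matrix n n ℂ} (hA : A.IsHermitian) (v x : n → ℂ) :
    star v ⬝ᵥ A *ᵥ x = star (A *ᵥ v) ⬝ᵥ x := by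
  rw [star_mulVec, show Aᴴ = A from hA, dotProduct_mulVec]

lemma ker_le_ker_of_range_le {n : Type*} [Fintype n] [DecidableEq n] {A B : Matrix n n ℂ}
    (hA : A.IsHermitian) (hB : B.PosSemidef)
    (h : LinearMap.range B.mulVecLin ≤ LinearMap.range A.mulVecLin) :
    ∀ x, A *ᵥ x = 0 → B *ᵥ x = 0 := by
  intro x hx
  obtain ⟨y, hy⟩ := h (LinearMap.mem_range_self B.mulVecLin x)
  rw [← hB.dotProduct_mulVec_zero_iff]
  have hy' : A *ᵥ y = B *ᵥ x := by simpa [Matrix.mulVecLin_apply] using hy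
  rw [← hy', herm_dot hA, hx]
  simp

lemma range_le_range_of_ker_le {n : Type*} [Fintype n] [DecidableEq n] {A B : Matrix n n ℂ}
    (hA : A.IsHermitian) (hB : B.IsHermitian)
    (h : ∀ x, A *ᵥ x = 0 → B *ᵥ x = 0) :
    LinearMap.range B.mulVecLin ≤ LinearMap.range A.mulVecLin := by
  set R := LinearMap.range A.mulVecLin
  set K := LinearMap.ker A.mulVecLin
  have hdisj : Disjoint R K := by
    rw [Submodule.disjoint_def]
    intro z hzR hzK
    obtain ⟨w, rfl⟩ := hzR
    have hz0 : A *ᵥ (A *ᵥ w) = 0 := by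
      have := hzK
      simp only [K, LinearMap.mem_ker, Matrix.mulVecLin_apply] at this
      exact this
    have : star (A.mulVecLin w : n → ℂ) ⬝ᵥ (A.mulVecLin w : n → ℂ) = 0 := by
      simp only [Matrix.mulVecLin_apply]
      rw [← herm_dot hA, hz0, dotProduct_zero]
    exact dotProduct_star_self_eq_zero.mp this
  have htop : R ⊔ K = ⊤ :=
    Submodule.eq_top_of_disjoint R K (LinearMap.finrank_range_add_finrank_ker A.mulVecLin).ge hdisj
  rintro _ ⟨x, rfl⟩
  have hy : (B.mulVecLin x : n → ℂ) ∈ R ⊔ K := htop ▸ Submodule.mem_top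
  obtain ⟨u, hu, v, hv, huv⟩ := Submodule.mem_sup.mp hy
  obtain ⟨w, hw⟩ := hu
  have hv0 : A *ᵥ v = 0 := hv
  have hBv : B *ᵥ v = 0 := h v hv0
  have h1 : star v ⬝ᵥ (B.mulVecLin x : n → ℂ) = 0 := by
    rw [Matrix.mulVecLin_apply, herm_dot hB, hBv]
    simp
  have h2 : star v ⬝ᵥ u = 0 := by
    rw [← hw, Matrix.mulVecLin_apply, herm_dot hA, hv0]
    simp
  have hvz : v = 0 := by
    have : star v ⬝ᵥ v = 0 := by
      have := huv ▸ h1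
      rwa [dotProduct_add, h2, zero_add] at this
    exact dotProduct_star_self_eq_zero.mp this
  have : (B.mulVecLin x : n → ℂ) = u := by rw [← huv, hvz, add_zero]
  exact this ▸ ⟨w, hw⟩

lemma star_dot_self_eq {n : Type*} [Fintype n] (z : n → ℂ) :
    star z ⬝ᵥ z = ((∑ i, Complex.normSq (z i) : ℝ) : ℂ) := by
  push_cast
  simp only [dotProduct, Pi.star_apply, RCLike.star_def]
  exact Finset.sum_congr rfl fun i _ => by
    rw [← Complex.normSq_eq_conj_mul_self]

lemma star_vecMul_unitary {n : Type*} [Fintype n] [DecidableEq n]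
    (U : Matrix n n ℂ) (x : n → ℂ) :
    star x ᵥ* U = star (star U *ᵥ x) := by
  rw [star_mulVec]
  simp [Matrix.star_eq_conjTranspose]

lemma quad_eq_sum {n : Type*} [Fintype n] [DecidableEq n] {A : Matrix n n ℂ}
    (hA : A.IsHermitian) (x : n → ℂ) :
    star x ⬝ᵥ A *ᵥ x =
      ((∑ i, hA.eigenvalues i *
        Complex.normSq ((star (hA.eigenvectorUnitary : Matrix n n ℂ) *ᵥ x) i) : ℝ) : ℂ) := by
  set U : Matrix n n ℂ := (hA.eigenvectorUnitary : Matrix n n ℂ)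
  set y : n → ℂ := star U *ᵥ x with hy
  conv_lhs => rw [hA.spectral_theorem, Unitary.conjStarAlgAut_apply]
  rw [← mulVec_mulVec, ← mulVec_mulVec, dotProduct_mulVec, star_vecMul_unitary, ← hy]
  simp only [dotProduct, mulVec_diagonal, Function.comp_apply, Pi.star_apply, RCLike.star_def]
  push_cast
  refine Finset.sum_congr rfl fun i _ => ?_
  rw [mul_left_comm, ← Complex.normSq_eq_conj_mul_self]
  rfl

lemma sum_normSq_coords {n : Type*} [Fintype n] [DecidableEq n] {A : Matrix n n ℂ}
    (hA : A.IsHermitian) (x : n → ℂ) :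
    ∑ i, Complex.normSq ((star (hA.eigenvectorUnitary : Matrix n n ℂ) *ᵥ x) i) =
      ∑ i, Complex.normSq (x i) := by
  set U : Matrix n n ℂ := (hA.eigenvectorUnitary : Matrix n n ℂ)
  set y : n → ℂ := star U *ᵥ x with hy
  have h1 : star y ⬝ᵥ y = star x ⬝ᵥ x := by
    rw [hy, ← star_vecMul_unitary, ← dotProduct_mulVec, mulVec_mulVec,
      (Matrix.mem_unitaryGroup_iff).mp hA.eigenvectorUnitary.2, one_mulVec]
  have := h1
  rw [star_dot_self_eq, star_dot_self_eq] at this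
  exact_mod_cast this

lemma exists_pos_sub_smul_posSemidef {n : Type*} [Fintype n] [DecidableEq n]
    {ρ σ : Matrix n n ℂ} (hρ : ρ.PosSemidef) (hσ : σ.PosSemidef) (hρ0 : ρ ≠ 0)
    (hker : ∀ x, ρ *ᵥ x = 0 → σ *ᵥ x = 0) :
    ∃ ε : ℝ, 0 < ε ∧ (ρ - (ε : ℂ) • σ).PosSemidef := by
  classical
  have hA : ρ.IsHermitian := hρ.1
  set lam : n → ℝ := hA.eigenvalues with hlam
  set U : Matrix n n ℂ := (hA.eigenvectorUnitary : Matrix n n ℂ) with hU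
  have hUU' : star U * U = 1 := (Matrix.mem_unitaryGroup_iff').mp hA.eigenvectorUnitary.2
  have hlam0 : ∀ i, 0 ≤ lam i := fun i => hρ.eigenvalues_nonneg i
  set s : Finset n := Finset.univ.filter (fun i => 0 < lam i) with hsdef
  have hs : s.Nonempty := by
    by_contra hempty
    apply hρ0
    have hall : ∀ i, lam i = 0 := by
      intro i
      by_contra hne
      exact hempty ⟨i, Finset.mem_filter.mpr ⟨Finset.mem_univ i,
        lt_of_le_of_ne (hlam0 i) (Ne.symm hne)⟩⟩
    have hdiag : diagonal (RCLike.ofReal ∘ lam) = (0 : Matrix n n ℂ) := by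
      ext i j
      by_cases hij : i = j <;> simp [diagonal, hij, hall]
    calc ρ = U * diagonal (RCLike.ofReal ∘ lam) * star U := hA.spectral_theorem
    _ = 0 := by rw [hdiag]; simp
  set m : ℝ := s.inf' hs lam with hm
  have hmpos : 0 < m := by
    rw [hm, Finset.lt_inf'_iff]
    intro i hi
    exact (Finset.mem_filter.mp hi).2
  set μ : n → ℝ := hσ.1.eigenvalues with hμ
  have hμ0 : ∀ j, 0 ≤ μ j := fun j => hσ.eigenvalues_nonneg j
  set Mσ : ℝ := ∑ j, μ j with hMσ
  have hMσ0 : 0 ≤ Mσ := Finset.sum_nonneg fun j _ => hμ0 j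
  have hμle : ∀ j, μ j ≤ Mσ := fun j =>
    Finset.single_le_sum (fun j _ => hμ0 j) (Finset.mem_univ j)
  set ε : ℝ := m / (Mσ + 1) with hε
  have hεpos : 0 < ε := div_pos hmpos (by linarith)
  refine ⟨ε, hεpos, posSemidef_iff_dotProduct_mulVec.mpr ⟨?_, ?_⟩⟩
  · show (ρ - (ε:ℂ) • σ)ᴴ = ρ - (ε:ℂ) • σ
    rw [conjTranspose_sub, conjTranspose_smul, hρ.1, hσ.1]
    norm_num
  · intro x
    set y : n → ℂ := star U *ᵥ x with hy
    set y0 : n → ℂ := fun i => if 0 < lam i then 0 else y i with hy0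
    set x0 : n → ℂ := U *ᵥ y0 with hx0
    set x1 : n → ℂ := x - x0 with hx1
    have hUx0 : star U *ᵥ x0 = y0 := by rw [hx0, mulVec_mulVec, hUU', one_mulVec]
    have hρx0 : ρ *ᵥ x0 = 0 := by
      conv_lhs => rw [hA.spectral_theorem, Unitary.conjStarAlgAut_apply]
      rw [← mulVec_mulVec, ← mulVec_mulVec, hUx0]
      have hd : diagonal (RCLike.ofReal ∘ lam) *ᵥ y0 = 0 := by
        funext i
        simp only [mulVec_diagonal, Function.comp_apply, Pi.zero_apply, hy0]
        by_cases hpos : 0 < lam i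
        · simp [hpos]
        · have h0 : lam i = 0 := le_antisymm (not_lt.mp hpos) (hlam0 i)
          simp [h0]
      rw [hd, mulVec_zero]
    have hσx0 : σ *ᵥ x0 = 0 := hker _ hρx0
    have hQeq : star x ⬝ᵥ σ *ᵥ x = star x1 ⬝ᵥ σ *ᵥ x1 := by
      have hxsum : x = x1 + x0 := by rw [hx1]; abel
      conv_lhs => rw [hxsum]
      rw [mulVec_add, hσx0, add_zero, star_add, add_dotProduct, herm_dot hσ.1 x0 x1, hσx0]
      simp
    set qρx : ℝ := ∑ i, lam i * Complex.normSq (y i) with hqρx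
    set qσx : ℝ := ∑ j, μ j *
      Complex.normSq ((star (hσ.1.eigenvectorUnitary : Matrix n n ℂ) *ᵥ x) j) with hqσx
    set qσx1 : ℝ := ∑ j, μ j *
      Complex.normSq ((star (hσ.1.eigenvectorUnitary : Matrix n n ℂ) *ᵥ x1) j) with hqσx1
    have hqeq : qσx = qσx1 := by
      have := hQeq
      rw [quad_eq_sum hσ.1 x, quad_eq_sum hσ.1 x1] at this
      exact_mod_cast this
    set nx1 : ℝ := ∑ i, Complex.normSq (x1 i) with hnx1
    have hnx1nonneg : 0 ≤ nx1 := Finset.sum_nonneg fun i _ => Complex.normSq_nonneg _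
    have hd : qσx1 ≤ Mσ * nx1 := by
      calc qσx1 ≤ ∑ j, Mσ *
            Complex.normSq ((star (hσ.1.eigenvectorUnitary : Matrix n n ℂ) *ᵥ x1) j) :=
            Finset.sum_le_sum fun j _ =>
              mul_le_mul_of_nonneg_right (hμle j) (Complex.normSq_nonneg _)
        _ = Mσ * ∑ j, Complex.normSq ((star (hσ.1.eigenvectorUnitary : Matrix n n ℂ) *ᵥ x1) j) := by
            rw [Finset.mul_sum]
        _ = Mσ * nx1 := by rw [sum_normSq_coords hσ.1 x1]
    have hcoords1 : star U *ᵥ x1 = y - y0 := by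
      rw [hx1, mulVec_sub, hUx0, hy]
    have hnx1eq : nx1 = ∑ i ∈ s, Complex.normSq (y i) := by
      have h1 : nx1 = ∑ i, Complex.normSq ((star U *ᵥ x1) i) :=
        (sum_normSq_coords hA x1).symm
      rw [h1, hcoords1]
      rw [hsdef, Finset.sum_filter]
      refine Finset.sum_congr rfl fun i _ => ?_
      by_cases hpos : 0 < lam i
      · simp [hy0, hpos]
      · simp [hy0, hpos]
    have hf : m * nx1 ≤ qρx := by
      calc m * nx1 = ∑ i ∈ s, m * Complex.normSq (y i) := by
            rw [hnx1eq, Finset.mul_sum]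
        _ ≤ ∑ i ∈ s, lam i * Complex.normSq (y i) :=
            Finset.sum_le_sum fun i hi =>
              mul_le_mul_of_nonneg_right (Finset.inf'_le lam hi) (Complex.normSq_nonneg _)
        _ ≤ ∑ i, lam i * Complex.normSq (y i) :=
            Finset.sum_le_sum_of_subset_of_nonneg (Finset.filter_subset _ _)
              (fun i _ _ => mul_nonneg (hlam0 i) (Complex.normSq_nonneg _))
        _ = qρx := rfl
    have hεMσ : ε * Mσ ≤ m := by
      rw [hε, div_mul_eq_mul_div, div_le_iff₀ (by linarith : (0:ℝ) < Mσ + 1)]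
      nlinarith
    have hreal : ε * qσx ≤ qρx := by
      calc ε * qσx = ε * qσx1 := by rw [hqeq]
        _ ≤ ε * (Mσ * nx1) := mul_le_mul_of_nonneg_left hd hεpos.le
        _ = (ε * Mσ) * nx1 := by ring
        _ ≤ m * nx1 := mul_le_mul_of_nonneg_right hεMσ hnx1nonneg
        _ ≤ qρx := hf
    have hgoal : star x ⬝ᵥ (ρ - (ε:ℂ) • σ) *ᵥ x = ((qρx - ε * qσx : ℝ) : ℂ) := by
      rw [sub_mulVec, dotProduct_sub, smul_mulVec, dotProduct_smul,
        quad_eq_sum hA x, quad_eq_sum hσ.1 x, smul_eq_mul,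
        Complex.ofReal_sub, Complex.ofReal_mul]
    rw [hgoal]
    rw [Complex.zero_le_real]
    linarith

noncomputable def lindbladLM {n : Type*} [Fintype n] [DecidableEq n] {ι : Type*} [Fintype ι]
    (H : Matrix n n ℂ) (V : ι → Matrix n n ℂ) : Matrix n n ℂ →ₗ[ℂ] Matrix n n ℂ where
  toFun := lindblad H V
  map_add' x y := by
    have h1 : ∀ d : ι, V d * (x+y) * (V d)ᴴ
          - (1/2:ℂ) • ((V d)ᴴ * V d * (x+y) + (x+y) * ((V d)ᴴ * V d))
        = (V d * x * (V d)ᴴ - (1/2:ℂ) • ((V d)ᴴ * V d * x + x * ((V d)ᴴ * V d)))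
          + (V d * y * (V d)ᴴ - (1/2:ℂ) • ((V d)ᴴ * V d * y + y * ((V d)ᴴ * V d))) := by
      intro d
      simp only [mul_add, add_mul, smul_add]
      abel
    show lindblad H V (x + y) = lindblad H V x + lindblad H V y
    unfold lindblad
    rw [Finset.sum_congr rfl fun d _ => h1 d, Finset.sum_add_distrib]
    simp only [mul_add, add_mul, smul_add, smul_sub]
    abel
  map_smul' c x := by
    have h1 : ∀ d : ι, V d * (c • x) * (V d)ᴴ
          - (1/2:ℂ) • ((V d)ᴴ * V d * (c • x) + (c • x) * ((V d)ᴴ * V d))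
        = c • (V d * x * (V d)ᴴ - (1/2:ℂ) • ((V d)ᴴ * V d * x + x * ((V d)ᴴ * V d))) := by
      intro d
      simp only [Matrix.mul_smul, Matrix.smul_mul, smul_add, smul_sub, smul_comm (1/2:ℂ) c]
    show lindblad H V (c • x) = c • lindblad H V x
    unfold lindblad
    rw [Finset.sum_congr rfl fun d _ => h1 d, ← Finset.smul_sum]
    simp only [Matrix.mul_smul, Matrix.smul_mul, ← smul_sub, smul_comm c (-Complex.I), smul_add]

lemma real_smul_matrix {n : Type*} (a : ℝ) (M : Matrix n n ℂ) : a • M = (a:ℂ) • M := by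
  ext i j
  simp [Complex.real_smul]

lemma smul_posSemidef {n : Type*} [Fintype n] {σ : Matrix n n ℂ} {c : ℝ} (hc : 0 ≤ c)
    (hσ : σ.PosSemidef) : ((c:ℂ) • σ).PosSemidef := by
  rw [posSemidef_iff_dotProduct_mulVec]
  constructor
  · show _ᴴ = _
    rw [conjTranspose_smul, hσ.1]
    norm_num
  · intro x
    rw [smul_mulVec, dotProduct_smul, smul_eq_mul]
    exact mul_nonneg (Complex.zero_le_real.mpr hc) (hσ.dotProduct_mulVec_nonneg x)

end Aux

/-- A steady state is extremal iff it is the unique steady state whose support is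
contained in its own support. -/
theorem extremal_iff_unique_in_support (N : ℕ) (hN : 1 ≤ N)
    (H : Matrix (Fin N) (Fin N) ℂ) (hH : H.IsHermitian)
    {ι : Type*} [Fintype ι] (V : ι → Matrix (Fin N) (Fin N) ℂ)
    (ρ : Matrix (Fin N) (Fin N) ℂ) (hρ : IsSteadyState H V ρ) :
    IsExtremalSteadyState H V ρ ↔
      ∀ σ : Matrix (Fin N) (Fin N) ℂ, IsSteadyState H V σ →
        matSupport σ ≤ matSupport ρ → σ = ρ := by
  obtain ⟨⟨hρpsd, hρtr⟩, hρlin⟩ := hρ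
  constructor
  · rintro ⟨-, hext⟩ σ hσ hsupp
    obtain ⟨⟨hσpsd, hσtr⟩, hσlin⟩ := hσ
    have hker : ∀ x, ρ *ᵥ x = 0 → σ *ᵥ x = 0 :=
      ker_le_ker_of_range_le hρpsd.1 hσpsd hsupp
    have hρne : ρ ≠ 0 := by
      intro h
      rw [h] at hρtr
      simp at hρtr
    obtain ⟨ε₀, hε₀, hPSD₀⟩ := exists_pos_sub_smul_posSemidef hρpsd hσpsd hρne hker
    set ε : ℝ := min ε₀ (1/2) with hε
    have hεpos : 0 < ε := lt_min hε₀ (by norm_num)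
    have hεlt : ε < 1 := lt_of_le_of_lt (min_le_right _ _) (by norm_num)
    have hPSD : (ρ - (ε:ℂ) • σ).PosSemidef := by
      have key : ρ - (ε:ℂ) • σ = (ρ - (ε₀:ℂ) • σ) + ((ε₀ - ε : ℝ):ℂ) • σ := by
        rw [Complex.ofReal_sub, sub_smul]
        abel
      rw [key]
      exact hPSD₀.add (smul_posSemidef (sub_nonneg.mpr (min_le_left _ _)) hσpsd)
    have h1ε : (0:ℝ) < 1 - ε := by linarith
    set τ : Matrix (Fin N) (Fin N) ℂ := (((1-ε:ℝ)⁻¹ : ℝ):ℂ) • (ρ - (ε:ℂ) • σ) with hτ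
    have hτpsd : τ.PosSemidef := smul_posSemidef (by positivity) hPSD
    have hτtr : τ.trace = 1 := by
      rw [hτ, trace_smul, trace_sub, trace_smul, hρtr, hσtr, smul_eq_mul, smul_eq_mul, mul_one]
      have h2 : ((1:ℂ) - (ε:ℂ)) = ((1-ε:ℝ):ℂ) := by push_cast; ring
      rw [h2, ← Complex.ofReal_mul, inv_mul_cancel₀ (ne_of_gt h1ε)]
      norm_num
    have hτlin : lindblad H V τ = 0 := by
      have he : lindblad H V τ = lindbladLM H V τ := rfl
      rw [he, hτ, _root_.map_smul, map_sub, _root_.map_smul]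
      have h1 : lindbladLM H V ρ = 0 := hρlin
      have h2 : lindbladLM H V σ = 0 := hσlin
      rw [h1, h2]
      simp
    have hdecomp : ρ = ε • σ + (1 - ε) • τ := by
      rw [real_smul_matrix, real_smul_matrix, hτ, smul_smul]
      rw [show ((1-ε:ℝ):ℂ) * (((1-ε:ℝ)⁻¹ : ℝ):ℂ) = 1 by
        rw [← Complex.ofReal_mul, mul_inv_cancel₀ (ne_of_gt h1ε)]; norm_num]
      rw [one_smul]
      abel
    exact (hext ε σ τ hεpos hεlt ⟨⟨hσpsd, hσtr⟩, hσlin⟩ ⟨⟨hτpsd, hτtr⟩, hτlin⟩ hdecomp).1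
  · intro huniq
    refine ⟨⟨⟨hρpsd, hρtr⟩, hρlin⟩, ?_⟩
    intro a ρ₁ ρ₂ ha0 ha1 h1 h2 heq
    obtain ⟨⟨h1psd, h1tr⟩, h1lin⟩ := h1
    obtain ⟨⟨h2psd, h2tr⟩, h2lin⟩ := h2
    have heqC : ρ = (a:ℂ) • ρ₁ + ((1-a:ℝ):ℂ) • ρ₂ := by
      rw [heq, real_smul_matrix, real_smul_matrix]
    have key : ∀ x, ρ *ᵥ x = 0 → ρ₁ *ᵥ x = 0 ∧ ρ₂ *ᵥ x = 0 := by
      intro x hx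
      have hq : (a:ℂ) * (star x ⬝ᵥ ρ₁ *ᵥ x) + ((1-a:ℝ):ℂ) * (star x ⬝ᵥ ρ₂ *ᵥ x) = 0 := by
        have h0 : star x ⬝ᵥ ρ *ᵥ x = 0 := by rw [hx, dotProduct_zero]
        rw [heqC, add_mulVec, smul_mulVec, smul_mulVec, dotProduct_add,
          dotProduct_smul, dotProduct_smul, smul_eq_mul, smul_eq_mul] at h0
        exact h0
      have hQ1 : 0 ≤ star x ⬝ᵥ ρ₁ *ᵥ x := h1psd.dotProduct_mulVec_nonneg x
      have hQ2 : 0 ≤ star x ⬝ᵥ ρ₂ *ᵥ x := h2psd.dotProduct_mulVec_nonneg x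
      have ha' : (0:ℂ) ≤ (a:ℂ) := Complex.zero_le_real.mpr ha0.le
      have hb' : (0:ℂ) ≤ ((1-a:ℝ):ℂ) := Complex.zero_le_real.mpr (by linarith)
      have ht1 : (0:ℂ) ≤ (a:ℂ) * (star x ⬝ᵥ ρ₁ *ᵥ x) := mul_nonneg ha' hQ1
      have ht2 : (0:ℂ) ≤ ((1-a:ℝ):ℂ) * (star x ⬝ᵥ ρ₂ *ᵥ x) := mul_nonneg hb' hQ2
      have hz1 : (a:ℂ) * (star x ⬝ᵥ ρ₁ *ᵥ x) = 0 :=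
        le_antisymm (by rw [← hq]; exact le_add_of_nonneg_right ht2) ht1
      have hz2 : ((1-a:ℝ):ℂ) * (star x ⬝ᵥ ρ₂ *ᵥ x) = 0 :=
        le_antisymm (by rw [← hq]; exact le_add_of_nonneg_left ht1) ht2
      constructor
      · have hQ0 : star x ⬝ᵥ ρ₁ *ᵥ x = 0 := by
          have haz : (a:ℂ) ≠ 0 := by exact_mod_cast ne_of_gt ha0
          exact (mul_eq_zero.mp hz1).resolve_left haz
        exact (h1psd.dotProduct_mulVec_zero_iff x).mp hQ0
      · have hQ0 : star x ⬝ᵥ ρ₂ *ᵥ x = 0 := by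
          have hbz : ((1-a:ℝ):ℂ) ≠ 0 := by
            simp only [ne_eq, Complex.ofReal_eq_zero]
            linarith
          exact (mul_eq_zero.mp hz2).resolve_left hbz
        exact (h2psd.dotProduct_mulVec_zero_iff x).mp hQ0
    have hr1 : ρ₁ = ρ := huniq ρ₁ ⟨⟨h1psd, h1tr⟩, h1lin⟩
      (range_le_range_of_ker_le hρpsd.1 h1psd.1 fun x hx => (key x hx).1)
    have hr2 : ρ₂ = ρ := huniq ρ₂ ⟨⟨h2psd, h2tr⟩, h2lin⟩
      (range_le_range_of_ker_le hρpsd.1 h2psd.1 fun x hx => (key x hx).2)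
    exact ⟨hr1, hr2⟩
end

section
/- If ρ is a steady state of the Lindblad generator with rank(ρ) < N (i.e., ρ lies on the boundary of the set of density matrices), then its support S = supp(ρ) is an invariant subspace for each Lindblad operator V_d: for every d and every vector x ∈ S, V_d x ∈ S. -/
open Matrix
open scoped ComplexOrder

/-- If `ρ` is a steady state at the boundary (rank < N), then its support is invariant
under each Lindblad operator `V_d`. -/
theorem steady_state_boundary_support_invariant (N : ℕ) (hN : 1 ≤ N)
    (H : Matrix (Fin N) (Fin N) ℂ) (hH : H.IsHermitian)
    {ι : Type*} [Fintype ι] (V : ι → Matrix (Fin N) (Fin N) ℂ)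
    (ρ : Matrix (Fin N) (Fin N) ℂ) (hρ : IsSteadyState H V ρ) (hrank : ρ.rank < N) :
    ∀ d : ι, ∀ x ∈ matSupport ρ, (V d).mulVec x ∈ matSupport ρ := by
  obtain ⟨⟨hpsd, htr⟩, hL⟩ := hρ
  have hherm : ρ.IsHermitian := hpsd.1
  -- the quadratic form `M ↦ y⋆ M y` as a linear map in `M`
  have quad : ∀ y : Fin N → ℂ, ∃ f : Matrix (Fin N) (Fin N) ℂ →ₗ[ℂ] ℂ,
      ∀ M, f M = star y ⬝ᵥ M.mulVec y := by
    intro y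
    refine ⟨{ toFun := fun M => star y ⬝ᵥ M.mulVec y, map_add' := ?_, map_smul' := ?_ },
      fun _ => rfl⟩
    · intro A B
      simp [Matrix.add_mulVec, dotProduct_add]
    · intro c A
      simp [Matrix.smul_mulVec, dotProduct_smul]
  -- orthogonality to the kernel implies membership in the range (for Hermitian ρ)
  have hmem_range : ∀ z : Fin N → ℂ,
      (∀ y : Fin N → ℂ, ρ.mulVec y = 0 → star y ⬝ᵥ z = 0) →
      z ∈ matSupport ρ := by
    intro z hz
    set T := Matrix.toEuclideanLin ρ with hT
    have hadj : LinearMap.adjoint T = T := by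
      rw [hT, ← Matrix.toEuclideanLin_conjTranspose_eq_adjoint, hherm.eq]
    have hrange_le : LinearMap.range T ≤ (LinearMap.ker T)ᗮ := by
      rintro _ ⟨u, rfl⟩
      rw [Submodule.mem_orthogonal]
      intro w hw
      rw [← hadj, LinearMap.adjoint_inner_right, LinearMap.mem_ker.mp hw,
        inner_zero_left]
    have hfin : Module.finrank ℂ ((LinearMap.ker T)ᗮ : Submodule ℂ (EuclideanSpace ℂ (Fin N)))
        ≤ Module.finrank ℂ (LinearMap.range T) := by
      have h1 := Submodule.finrank_add_finrank_orthogonal (K := LinearMap.ker T)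
      have h2 := LinearMap.finrank_range_add_finrank_ker T
      omega
    have hrange_eq : LinearMap.range T = (LinearMap.ker T)ᗮ :=
      Submodule.eq_of_le_of_finrank_le hrange_le hfin
    have hz' : (WithLp.equiv 2 (Fin N → ℂ)).symm z ∈ (LinearMap.ker T)ᗮ := by
      rw [Submodule.mem_orthogonal]
      intro w hw
      have hw0 : ρ.mulVec (WithLp.equiv 2 (Fin N → ℂ) w) = 0 := by
        have h1 := congrArg (WithLp.equiv 2 (Fin N → ℂ)) (LinearMap.mem_ker.mp hw)
        exact h1
      calc inner ℂ w ((WithLp.equiv 2 (Fin N → ℂ)).symm z)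
          = star (WithLp.equiv 2 (Fin N → ℂ) w) ⬝ᵥ z :=
            (EuclideanSpace.inner_eq_star_dotProduct _ _).trans (dotProduct_comm _ _)
        _ = 0 := hz _ hw0
    rw [← hrange_eq] at hz'
    obtain ⟨u, hu⟩ := hz'
    refine ⟨WithLp.equiv 2 (Fin N → ℂ) u, ?_⟩
    have h1 := congrArg (WithLp.equiv 2 (Fin N → ℂ)) hu
    exact h1
  -- key: the kernel of ρ is invariant under each (V d)ᴴ
  have hker : ∀ y : Fin N → ℂ, ρ.mulVec y = 0 → ∀ d, ρ.mulVec ((V d)ᴴ.mulVec y) = 0 := by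
    intro y hy d
    have hyρ : star y ᵥ* ρ = 0 := by
      have h := congrArg star hy
      rwa [Matrix.star_mulVec, hherm.eq, star_zero] at h
    obtain ⟨f, hf⟩ := quad y
    -- f kills the Hamiltonian part and the anticommutator parts
    have hMρ : ∀ M : Matrix (Fin N) (Fin N) ℂ, f (M * ρ) = 0 := by
      intro M
      rw [hf, ← Matrix.mulVec_mulVec, hy, Matrix.mulVec_zero, dotProduct_zero]
    have hρM : ∀ M : Matrix (Fin N) (Fin N) ℂ, f (ρ * M) = 0 := by
      intro M
      rw [hf, ← Matrix.mulVec_mulVec, Matrix.dotProduct_mulVec, hyρ,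
        zero_dotProduct]
    have h0 : f (lindblad H V ρ) = 0 := by rw [hL, map_zero]
    rw [lindblad, map_add, map_sum] at h0
    have hham : f (-Complex.I • (H * ρ - ρ * H)) = 0 := by
      rw [f.map_smul, map_sub, hMρ, hρM, sub_zero, smul_zero]
    have hterm : ∀ e, f (V e * ρ * (V e)ᴴ - (1 / 2 : ℂ) •
        ((V e)ᴴ * V e * ρ + ρ * ((V e)ᴴ * V e))) = f (V e * ρ * (V e)ᴴ) := by
      intro e
      rw [map_sub, f.map_smul, map_add, hρM, mul_assoc, hMρ, add_zero, smul_zero, sub_zero]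
    rw [hham, zero_add, Finset.sum_congr rfl fun e _ => hterm e] at h0
    -- each summand is nonnegative, so all vanish
    have hnonneg : ∀ e, (0 : ℂ) ≤ f (V e * ρ * (V e)ᴴ) := by
      intro e
      rw [hf]
      exact (hpsd.mul_mul_conjTranspose_same (V e)).dotProduct_mulVec_nonneg y
    have hzero : f (V d * ρ * (V d)ᴴ) = 0 :=
      (Finset.sum_eq_zero_iff_of_nonneg fun e _ => hnonneg e).mp h0 d (Finset.mem_univ d)
    -- rewrite as a PSD quadratic form in (V d)ᴴ y
    have hrw : f (V d * ρ * (V d)ᴴ) = star ((V d)ᴴ.mulVec y) ⬝ᵥ ρ.mulVec ((V d)ᴴ.mulVec y) := by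
      rw [hf, ← Matrix.mulVec_mulVec, ← Matrix.mulVec_mulVec, Matrix.dotProduct_mulVec,
        Matrix.star_mulVec, Matrix.conjTranspose_conjTranspose]
    rw [hrw] at hzero
    exact (hpsd.dotProduct_mulVec_zero_iff _).mp hzero
  -- conclude
  intro d x hx
  obtain ⟨u, hu⟩ := hx
  refine hmem_range _ fun y hy => ?_
  have hkery := hker y hy d
  have hx' : (V d).mulVec x = (V d).mulVec (ρ.mulVec u) := by rw [← hu]; rfl
  rw [hx']
  have h1 : star y ⬝ᵥ (V d).mulVec (ρ.mulVec u) =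
      star ((V d)ᴴ.mulVec y) ⬝ᵥ ρ.mulVec u := by
    rw [Matrix.dotProduct_mulVec, Matrix.star_mulVec, Matrix.conjTranspose_conjTranspose]
  rw [h1, Matrix.dotProduct_mulVec]
  have h2 : star ((V d)ᴴ.mulVec y) ᵥ* ρ = 0 := by
    have h := congrArg star hkery
    rwa [Matrix.star_mulVec, hherm.eq, star_zero] at h
  rw [h2, zero_dotProduct]
end

section
/- Let ρ_ss be an extremal steady state of the Lindblad generator. If there is no nonzero subspace S of ℂ^N orthogonal to supp(ρ_ss) that is invariant under every Lindblad operator V_d (i.e., V_d(S) ⊆ S for all d), then ρ_ss is the unique steady state. -/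
open Matrix
open scoped ComplexOrder

section LindbladAuxSection

set_option linter.unusedSectionVars false
set_option linter.unnecessarySimpa false

namespace LindbladAux
variable {n : Type*} [Fintype n] [DecidableEq n]

lemma conj_mul_conj (U : Matrix.unitaryGroup n ℂ) (D₁ D₂ : n → ℂ) :
    ((U : Matrix n n ℂ) * diagonal D₁ * (star U : Matrix n n ℂ)) *
      ((U : Matrix n n ℂ) * diagonal D₂ * (star U : Matrix n n ℂ)) =
      (U : Matrix n n ℂ) * diagonal (fun i => D₁ i * D₂ i) * (star U : Matrix n n ℂ) := by
  have h : (star U : Matrix n n ℂ) * (U : Matrix n n ℂ) = 1 := by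
    simpa using unitary.coe_star_mul_self U
  calc ((U : Matrix n n ℂ) * diagonal D₁ * (star U : Matrix n n ℂ)) *
      ((U : Matrix n n ℂ) * diagonal D₂ * (star U : Matrix n n ℂ))
      = (U : Matrix n n ℂ) * diagonal D₁ * ((star U : Matrix n n ℂ) * (U : Matrix n n ℂ)) *
        diagonal D₂ * (star U : Matrix n n ℂ) := by
        simp only [Matrix.mul_assoc]
    _ = (U : Matrix n n ℂ) * (diagonal D₁ * diagonal D₂) * (star U : Matrix n n ℂ) := by
        rw [h]; simp only [Matrix.mul_one, Matrix.mul_assoc]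
    _ = (U : Matrix n n ℂ) * diagonal (fun i => D₁ i * D₂ i) * (star U : Matrix n n ℂ) := by
        rw [diagonal_mul_diagonal]

lemma exists_spectral {A : Matrix n n ℂ} (hA : A.IsHermitian) :
    ∃ (U : Matrix.unitaryGroup n ℂ) (lam : n → ℝ),
      A = (U : Matrix n n ℂ) * diagonal (fun i => (lam i : ℂ)) * (star U : Matrix n n ℂ) := by
  refine ⟨hA.eigenvectorUnitary, hA.eigenvalues, ?_⟩
  convert hA.spectral_theorem using 3
  rw [Unitary.conjStarAlgAut_apply]; rfl

lemma conj_psd (U : Matrix.unitaryGroup n ℂ) {D : n → ℂ} (hD : ∀ i, 0 ≤ D i) :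
    ((U : Matrix n n ℂ) * diagonal D * (star U : Matrix n n ℂ)).PosSemidef := by
  have h1 : (diagonal D).PosSemidef := posSemidef_diagonal_iff.mpr hD
  have := h1.mul_mul_conjTranspose_same (U : Matrix n n ℂ)
  rwa [← star_eq_conjTranspose] at this

lemma lam_nonneg {U : Matrix.unitaryGroup n ℂ} {lam : n → ℝ}
    (hA : ((U : Matrix n n ℂ) * diagonal (fun i => (lam i : ℂ)) *
      (star U : Matrix n n ℂ)).PosSemidef) (i : n) : 0 ≤ lam i := by
  have hsU : (star U : Matrix n n ℂ) * (U : Matrix n n ℂ) = 1 := by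
    simpa using unitary.coe_star_mul_self U
  have hD : diagonal (fun i => (lam i : ℂ)) = (star U : Matrix n n ℂ) *
      ((U : Matrix n n ℂ) * diagonal (fun i => (lam i : ℂ)) * (star U : Matrix n n ℂ)) *
      (U : Matrix n n ℂ) := by
    simp only [Matrix.mul_assoc, hsU, Matrix.mul_one]
    rw [← Matrix.mul_assoc, hsU, Matrix.one_mul]
  have hpsd : (diagonal (fun i => (lam i : ℂ))).PosSemidef := by
    rw [hD]
    have := hA.conjTranspose_mul_mul_same (U : Matrix n n ℂ)
    rwa [← star_eq_conjTranspose] at this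
  have := posSemidef_diagonal_iff.mp hpsd i
  exact_mod_cast this

lemma trace_conj_diag (U : Matrix.unitaryGroup n ℂ) (D : n → ℂ) :
    ((U : Matrix n n ℂ) * diagonal D * (star U : Matrix n n ℂ)).trace = ∑ i, D i := by
  have hsU : (star U : Matrix n n ℂ) * (U : Matrix n n ℂ) = 1 := by
    simpa using unitary.coe_star_mul_self U
  rw [trace_mul_cycle, hsU, Matrix.one_mul, trace_diagonal]

lemma exists_projection_psd {A : Matrix n n ℂ} (hA : A.PosSemidef) (hA0 : A ≠ 0) :
    ∃ (P : Matrix n n ℂ) (a : ℝ), P * P = P ∧ Pᴴ = P ∧ A * P = A ∧ P * A = A ∧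
      (∃ C, A * C = P) ∧ 0 < a ∧ a ≤ 1/2 ∧ (A - (a : ℂ) • P).PosSemidef := by
  obtain ⟨U, lam, rfl⟩ := exists_spectral hA.1
  have hlam : ∀ i, 0 ≤ lam i := lam_nonneg hA
  have hne : (Finset.univ.filter (fun i => lam i ≠ 0)).Nonempty := by
    by_contra hemp
    apply hA0
    rw [Finset.not_nonempty_iff_eq_empty, Finset.filter_eq_empty_iff] at hemp
    have : (fun i => ((lam i : ℂ))) = fun _ => 0 := by
      funext i
      simp [not_not.mp (hemp (Finset.mem_univ i))]
    rw [this]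
    simp
  set s := Finset.univ.filter (fun i => lam i ≠ 0) with hs
  set m := s.inf' hne lam with hmdef
  have hmpos : 0 < m := by
    obtain ⟨i, hi, hieq⟩ := Finset.exists_mem_eq_inf' hne lam
    rw [hmdef, hieq]
    rcases (hlam i).lt_or_eq with h | h
    · exact h
    · exfalso
      have : lam i ≠ 0 := (Finset.mem_filter.mp hi).2
      exact this h.symm
  set a := min m (1/2 : ℝ) with ha
  have hapos : 0 < a := lt_min hmpos (by norm_num)
  have hahalf : a ≤ 1/2 := min_le_right _ _
  have hbound : ∀ i, lam i ≠ 0 → a ≤ lam i := by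
    intro i hi
    exact le_trans (min_le_left _ _) (Finset.inf'_le lam (by simp [hs, hi]))
  refine ⟨(U : Matrix n n ℂ) * diagonal (fun i => if lam i = 0 then (0:ℂ) else 1) *
      (star U : Matrix n n ℂ), a, ?_, ?_, ?_, ?_,
      ⟨(U : Matrix n n ℂ) * diagonal (fun i => ((lam i : ℂ))⁻¹) * (star U : Matrix n n ℂ), ?_⟩,
      hapos, hahalf, ?_⟩
  · rw [conj_mul_conj]
    refine congrArg₂ _ (congrArg _ (congrArg _ (funext fun i => ?_))) rfl
    by_cases h : lam i = 0 <;> simp [h]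
  · rw [conjTranspose_mul, conjTranspose_mul, diagonal_conjTranspose]
    have h1 : ((star U : Matrix n n ℂ))ᴴ = (U : Matrix n n ℂ) := by
      rw [star_eq_conjTranspose, conjTranspose_conjTranspose]
    have h2 : ((U : Matrix n n ℂ))ᴴ = (star U : Matrix n n ℂ) := star_eq_conjTranspose _
    rw [h1, h2, Matrix.mul_assoc]
    have : (star fun i => if lam i = 0 then (0:ℂ) else 1) =
        (fun i => if lam i = 0 then (0:ℂ) else 1) := by
      funext i
      by_cases h : lam i = 0 <;> simp [h, Pi.star_apply]
    rw [this]
  · rw [conj_mul_conj]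
    refine congrArg₂ _ (congrArg _ (congrArg _ (funext fun i => ?_))) rfl
    by_cases h : lam i = 0 <;> simp [h]
  · rw [conj_mul_conj]
    refine congrArg₂ _ (congrArg _ (congrArg _ (funext fun i => ?_))) rfl
    by_cases h : lam i = 0 <;> simp [h]
  · rw [conj_mul_conj]
    refine congrArg₂ _ (congrArg _ (congrArg _ (funext fun i => ?_))) rfl
    by_cases h : lam i = 0 <;>
      simp [h, mul_inv_cancel₀, Complex.ofReal_eq_zero]
  · have hsmul : (a : ℂ) • ((U : Matrix n n ℂ) * diagonal (fun i => if lam i = 0 then (0:ℂ) else 1)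
        * (star U : Matrix n n ℂ)) = (U : Matrix n n ℂ) *
        diagonal (fun i => (a : ℂ) * (if lam i = 0 then (0:ℂ) else 1)) *
        (star U : Matrix n n ℂ) := by
      rw [← Matrix.smul_mul, ← Matrix.mul_smul]
      congr 2
      ext i j
      by_cases h : lam i = 0 <;> simp [diagonal, Matrix.of_apply, h, Pi.smul_apply]
    rw [hsmul]
    have hsub : (U : Matrix n n ℂ) * diagonal (fun i => (lam i : ℂ)) * (star U : Matrix n n ℂ) -
        (U : Matrix n n ℂ) * diagonal (fun i => (a : ℂ) * (if lam i = 0 then (0:ℂ) else 1)) *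
        (star U : Matrix n n ℂ) = (U : Matrix n n ℂ) *
        diagonal (fun i => (lam i : ℂ) - (a : ℂ) * (if lam i = 0 then (0:ℂ) else 1)) *
        (star U : Matrix n n ℂ) := by
      rw [← Matrix.sub_mul, ← Matrix.mul_sub, diagonal_sub]
    rw [hsub]
    apply conj_psd
    intro i
    by_cases h : lam i = 0
    · simp [h]
    · have h1 : a ≤ lam i := hbound i h
      simp only [h, if_false, mul_one]
      rw [show (lam i : ℂ) - (a : ℂ) = ((lam i - a : ℝ) : ℂ) by push_cast; ring,
        Complex.zero_le_real]
      linarith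

/-- `1 - σ` is PSD for a PSD matrix with trace 1. -/
lemma one_sub_psd {σ : Matrix n n ℂ} (hσ : σ.PosSemidef) (htr : σ.trace = 1) :
    ((1 : Matrix n n ℂ) - σ).PosSemidef := by
  obtain ⟨U, lam, rfl⟩ := exists_spectral hσ.1
  have hlam : ∀ i, 0 ≤ lam i := lam_nonneg hσ
  have hUs : (U : Matrix n n ℂ) * (star U : Matrix n n ℂ) = 1 := by
    simpa using unitary.coe_mul_star_self U
  have htr' : ∑ i, lam i = 1 := by
    rw [trace_conj_diag] at htr
    have : ((∑ i, lam i : ℝ) : ℂ) = 1 := by push_cast at htr ⊢; exact htr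
    exact_mod_cast this
  have hone : (1 : Matrix n n ℂ) = (U : Matrix n n ℂ) * diagonal (fun _ => (1:ℂ)) *
      (star U : Matrix n n ℂ) := by
    rw [diagonal_one, Matrix.mul_one, hUs]
  rw [hone, ← Matrix.sub_mul, ← Matrix.mul_sub, diagonal_sub]
  apply conj_psd
  intro i
  have : lam i ≤ 1 := by
    rw [← htr']
    exact Finset.single_le_sum (fun j _ => hlam j) (Finset.mem_univ i)
  have hc : ((1 - lam i : ℝ) : ℂ) = (1 : ℂ) - (lam i : ℂ) := by push_cast; ring
  rw [← hc, Complex.zero_le_real]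
  linarith

/-- smul of PSD by nonneg real (as complex scalar) -/
lemma smul_psd {A : Matrix n n ℂ} (hA : A.PosSemidef) {a : ℝ} (ha : 0 ≤ a) :
    ((a : ℂ) • A).PosSemidef := by
  rw [posSemidef_iff_dotProduct_mulVec]
  constructor
  · rw [IsHermitian, conjTranspose_smul, hA.1.eq]
    congr 1
    simp [Complex.star_def, Complex.conj_ofReal]
  · intro x
    rw [smul_mulVec, dotProduct_smul, smul_eq_mul]
    exact mul_nonneg (by rw [Complex.zero_le_real]; exact ha) (hA.dotProduct_mulVec_nonneg x)

lemma diag_nonneg {A : Matrix n n ℂ} (hA : A.PosSemidef) (i : n) : 0 ≤ A i i := by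
  have := hA.dotProduct_mulVec_nonneg (Pi.single i 1)
  simpa [dotProduct, mulVec, Pi.single_apply, Finset.sum_ite_eq, mul_ite] using this

lemma trace_nonneg {A : Matrix n n ℂ} (hA : A.PosSemidef) : 0 ≤ A.trace := by
  rw [Matrix.trace]
  exact Finset.sum_nonneg fun i _ => diag_nonneg hA i

lemma eq_zero_of_trace_eq_zero {A : Matrix n n ℂ} (hA : A.PosSemidef)
    (h : A.trace = 0) : A = 0 := by
  have hdiag : ∀ i, A i i = 0 := by
    intro i
    have := (Finset.sum_eq_zero_iff_of_nonneg
      (fun i _ => diag_nonneg hA i)).mp h i (Finset.mem_univ i)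
    exact this
  have hcol : ∀ i, A *ᵥ Pi.single i 1 = 0 := by
    intro i
    rw [← hA.dotProduct_mulVec_zero_iff]
    have : star (Pi.single i 1 : n → ℂ) ⬝ᵥ A *ᵥ Pi.single i 1 = A i i := by
      simp [dotProduct, mulVec, Pi.single_apply, Finset.sum_ite_eq, mul_ite]
    rw [this, hdiag]
  ext i j
  have := congrFun (hcol j) i
  simpa [mulVec, dotProduct, Pi.single_apply, mul_ite] using this

open scoped MatrixOrder in
/-- If `X * A * Xᴴ = 0` for `A` PSD then `X * A = 0`. -/
lemma mul_eq_zero_of_conj_eq_zero {A X : Matrix n n ℂ} (hA : A.PosSemidef)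
    (h : X * A * Xᴴ = 0) : X * A = 0 := by
  have hs : CFC.sqrt A * CFC.sqrt A = A := CFC.sqrt_mul_sqrt_self A hA.nonneg
  have hherm : (CFC.sqrt A)ᴴ = CFC.sqrt A := (CFC.sqrt_nonneg A).posSemidef.1
  have h0 : (X * CFC.sqrt A) * (X * CFC.sqrt A)ᴴ = 0 := by
    rw [conjTranspose_mul, hherm]
    calc X * CFC.sqrt A * (CFC.sqrt A * Xᴴ) = X * (CFC.sqrt A * CFC.sqrt A) * Xᴴ := by
          simp only [Matrix.mul_assoc]
      _ = 0 := by rw [hs, h]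
  have : X * CFC.sqrt A = 0 := Matrix.self_mul_conjTranspose_eq_zero.mp h0
  calc X * A = X * CFC.sqrt A * CFC.sqrt A := by rw [Matrix.mul_assoc, hs]
    _ = 0 := by rw [this, Matrix.zero_mul]

/-- trace of `X * A * Xᴴ` is nonneg for PSD A. -/
lemma trace_conj_nonneg {A X : Matrix n n ℂ} (hA : A.PosSemidef) :
    0 ≤ (X * A * Xᴴ).trace :=
  trace_nonneg (hA.mul_mul_conjTranspose_same X)


/-- Hermitian projection lemma (for B). -/
lemma exists_projection {A : Matrix n n ℂ} (hA : A.IsHermitian) :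
    ∃ P : Matrix n n ℂ, P * P = P ∧ Pᴴ = P ∧ A * P = A ∧ P * A = A ∧ ∃ C, A * C = P := by
  obtain ⟨U, lam, rfl⟩ := exists_spectral hA
  refine ⟨(U : Matrix n n ℂ) * diagonal (fun i => if lam i = 0 then (0:ℂ) else 1) *
      (star U : Matrix n n ℂ), ?_, ?_, ?_, ?_,
      (U : Matrix n n ℂ) * diagonal (fun i => ((lam i : ℂ))⁻¹) * (star U : Matrix n n ℂ), ?_⟩
  · rw [conj_mul_conj]
    refine congrArg₂ _ (congrArg _ (congrArg _ (funext fun i => ?_))) rfl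
    by_cases h : lam i = 0 <;> simp [h]
  · rw [conjTranspose_mul, conjTranspose_mul, diagonal_conjTranspose]
    have h1 : ((star U : Matrix n n ℂ))ᴴ = (U : Matrix n n ℂ) := by
      rw [star_eq_conjTranspose, conjTranspose_conjTranspose]
    have h2 : ((U : Matrix n n ℂ))ᴴ = (star U : Matrix n n ℂ) := star_eq_conjTranspose _
    rw [h1, h2, Matrix.mul_assoc]
    have : (star fun i => if lam i = 0 then (0:ℂ) else 1) =
        (fun i => if lam i = 0 then (0:ℂ) else 1) := by
      funext i
      by_cases h : lam i = 0 <;> simp [h, Pi.star_apply]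
    rw [this]
  · rw [conj_mul_conj]
    refine congrArg₂ _ (congrArg _ (congrArg _ (funext fun i => ?_))) rfl
    by_cases h : lam i = 0 <;> simp [h]
  · rw [conj_mul_conj]
    refine congrArg₂ _ (congrArg _ (congrArg _ (funext fun i => ?_))) rfl
    by_cases h : lam i = 0 <;> simp [h]
  · rw [conj_mul_conj]
    refine congrArg₂ _ (congrArg _ (congrArg _ (funext fun i => ?_))) rfl
    by_cases h : lam i = 0 <;>
      simp [h, mul_inv_cancel₀, Complex.ofReal_eq_zero]

/-- Key lemma: if a sum of traces of conjugations of a PSD matrix vanishes,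
each conjugating factor kills the matrix. -/
lemma conj_eq_zero_of_sum {ι : Type*} [Fintype ι] {B : Matrix n n ℂ} (hB : B.PosSemidef)
    {X : ι → Matrix n n ℂ} (h : ∑ d, (X d * B * (X d)ᴴ).trace = 0) :
    ∀ d, X d * B = 0 := by
  intro d
  have hnn : ∀ e ∈ Finset.univ, 0 ≤ ((X e * B * (X e)ᴴ).trace : ℂ) :=
    fun e _ => trace_conj_nonneg hB
  have h0 : (X d * B * (X d)ᴴ).trace = 0 :=
    (Finset.sum_eq_zero_iff_of_nonneg hnn).mp h d (Finset.mem_univ d)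
  exact mul_eq_zero_of_conj_eq_zero hB
    (eq_zero_of_trace_eq_zero (hB.mul_mul_conjTranspose_same _) h0)

/-- real smul as complex smul -/
lemma rsmul (r : ℝ) (A : Matrix n n ℂ) : r • A = ((r : ℂ)) • A := by
  ext i j
  simp [Complex.real_smul]

variable {ι : Type*} [Fintype ι] (H : Matrix n n ℂ) (V : ι → Matrix n n ℂ)

/-- The effective (non-Hermitian) Hamiltonian-type operator. -/
noncomputable def Kop : Matrix n n ℂ :=
  Complex.I • H + (1/2 : ℂ) • ∑ d, (V d)ᴴ * V d

lemma Kop_conjTranspose (hH : H.IsHermitian) :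
    (Kop H V)ᴴ = (-Complex.I) • H + (1/2 : ℂ) • ∑ d, (V d)ᴴ * V d := by
  rw [Kop, conjTranspose_add, conjTranspose_smul, conjTranspose_smul, hH.eq,
    conjTranspose_sum]
  simp_rw [conjTranspose_mul, conjTranspose_conjTranspose]
  simp [Complex.star_def, Complex.conj_I]

lemma Kop_add_conjTranspose (hH : H.IsHermitian) :
    Kop H V + (Kop H V)ᴴ = ∑ d, (V d)ᴴ * V d := by
  rw [Kop_conjTranspose H V hH, Kop]
  module

lemma lindblad_eq (hH : H.IsHermitian) (ρ : Matrix n n ℂ) :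
    lindblad H V ρ = (∑ d, V d * ρ * (V d)ᴴ) - (Kop H V * ρ + ρ * (Kop H V)ᴴ) := by
  rw [lindblad, Kop_conjTranspose H V hH, Kop]
  rw [Finset.sum_sub_distrib, ← Finset.smul_sum, Finset.sum_add_distrib,
    ← Matrix.sum_mul, ← Matrix.mul_sum]
  rw [Matrix.add_mul, Matrix.mul_add, Matrix.smul_mul, Matrix.smul_mul,
    Matrix.mul_smul, Matrix.mul_smul]
  module

lemma lindblad_smul (c : ℂ) (ρ : Matrix n n ℂ) :
    lindblad H V (c • ρ) = c • lindblad H V ρ := by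
  rw [lindblad, lindblad]
  rw [smul_add, Finset.smul_sum]
  congr 1
  · simp only [Matrix.mul_smul, Matrix.smul_mul]
    module
  · refine Finset.sum_congr rfl fun d _ => ?_
    simp only [Matrix.mul_smul, Matrix.smul_mul]
    module

lemma lindblad_sub (ρ τ : Matrix n n ℂ) :
    lindblad H V (ρ - τ) = lindblad H V ρ - lindblad H V τ := by
  rw [lindblad, lindblad, lindblad]
  have hs : (∑ d, (V d * (ρ - τ) * (V d)ᴴ - (1 / 2 : ℂ) •
      ((V d)ᴴ * V d * (ρ - τ) + (ρ - τ) * ((V d)ᴴ * V d)))) =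
      (∑ d, (V d * ρ * (V d)ᴴ - (1 / 2 : ℂ) • ((V d)ᴴ * V d * ρ + ρ * ((V d)ᴴ * V d)))) -
      (∑ d, (V d * τ * (V d)ᴴ - (1 / 2 : ℂ) • ((V d)ᴴ * V d * τ + τ * ((V d)ᴴ * V d)))) := by
    rw [← Finset.sum_sub_distrib]
    refine Finset.sum_congr rfl fun d _ => ?_
    simp only [Matrix.mul_sub, Matrix.sub_mul]
    module
  rw [hs, Matrix.mul_sub, Matrix.sub_mul]
  module

end LindbladAux
end LindbladAuxSection
/-- If no nonzero subspace orthogonal to the support of an extremal steady state is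
invariant under every Lindblad operator, then that steady state is unique. -/
theorem unique_steady_state_of_no_orthogonal_invariant_subspace
    (N : ℕ) (hN : 1 ≤ N)
    (H : Matrix (Fin N) (Fin N) ℂ) (hH : H.IsHermitian)
    {ι : Type*} [Fintype ι] (V : ι → Matrix (Fin N) (Fin N) ℂ)
    (ρss : Matrix (Fin N) (Fin N) ℂ) (hext : IsExtremalSteadyState H V ρss)
    (hno : ¬ ∃ S : Submodule ℂ (Fin N → ℂ), S ≠ ⊥ ∧
      (∀ x ∈ S, ∀ y ∈ matSupport ρss, star x ⬝ᵥ y = 0) ∧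
      (∀ d : ι, ∀ x ∈ S, (V d).mulVec x ∈ S)) :
    ∀ σ : Matrix (Fin N) (Fin N) ℂ, IsSteadyState H V σ → σ = ρss := by
  classical
  intro σ hσ
  obtain ⟨⟨hρpsd, hρtr⟩, hρL⟩ := hext.1
  obtain ⟨⟨hσpsd, hσtr⟩, hσL⟩ := hσ
  obtain ⟨K, hKdef⟩ : ∃ K' : Matrix (Fin N) (Fin N) ℂ, K' = LindbladAux.Kop H V :=
    ⟨_, rfl⟩
  have hLeq : ∀ ρ : Matrix (Fin N) (Fin N) ℂ,
      lindblad H V ρ = (∑ d, V d * ρ * (V d)ᴴ) - (K * ρ + ρ * Kᴴ) :=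
    fun ρ => by rw [hKdef]; exact LindbladAux.lindblad_eq H V hH ρ
  have hρ0 : ρss ≠ 0 := by
    intro h
    rw [h, trace_zero] at hρtr
    exact one_ne_zero hρtr.symm
  obtain ⟨P, a, hPP, hPH, hρP, hPρ, ⟨C, hρC⟩, ha0, ha2, hbd⟩ :=
    LindbladAux.exists_projection_psd hρpsd hρ0
  obtain ⟨Pc, hPcdef⟩ : ∃ Pc' : Matrix (Fin N) (Fin N) ℂ, Pc' = 1 - P := ⟨_, rfl⟩
  have hPcH : Pcᴴ = Pc := by rw [hPcdef, conjTranspose_sub, conjTranspose_one, hPH]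
  have hPcP : Pc * P = 0 := by
    rw [hPcdef, Matrix.sub_mul, Matrix.one_mul, hPP, sub_self]
  have hPPc : P * Pc = 0 := by
    rw [hPcdef, Matrix.mul_sub, Matrix.mul_one, hPP, sub_self]
  have hPcPc : Pc * Pc = Pc := by
    rw [hPcdef, Matrix.mul_sub, Matrix.mul_one, Matrix.sub_mul, Matrix.one_mul, hPP,
      sub_self, sub_zero]
  have hρPc : ρss * Pc = 0 := by
    rw [hPcdef, Matrix.mul_sub, Matrix.mul_one, hρP, sub_self]
  have hPcρ : Pc * ρss = 0 := by
    rw [hPcdef, Matrix.sub_mul, Matrix.one_mul, hPρ, sub_self]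
  -- Step (i): (1 - P) V_d ρss = 0
  have hsum0 : ∑ d, (Pc * V d) * ρss * (Pc * V d)ᴴ = 0 := by
    have h0 : Pc * lindblad H V ρss * Pc = 0 := by rw [hρL, Matrix.mul_zero, Matrix.zero_mul]
    rw [hLeq ρss, Matrix.mul_sub, Matrix.sub_mul, Matrix.mul_add, Matrix.add_mul] at h0
    have e1 : Pc * (K * ρss) * Pc = 0 := by
      rw [← Matrix.mul_assoc, Matrix.mul_assoc (Pc * K), hρPc, Matrix.mul_zero]
    have e2 : Pc * (ρss * Kᴴ) * Pc = 0 := by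
      rw [← Matrix.mul_assoc, hPcρ, Matrix.zero_mul, Matrix.zero_mul]
    rw [e1, e2, add_zero, sub_zero, Matrix.mul_sum, Matrix.sum_mul] at h0
    rw [← h0]
    refine Finset.sum_congr rfl fun d _ => ?_
    rw [conjTranspose_mul, hPcH]
    simp only [Matrix.mul_assoc]
  have hPcVρ : ∀ d, (Pc * V d) * ρss = 0 := by
    apply LindbladAux.conj_eq_zero_of_sum hρpsd
    rw [← trace_sum, hsum0, trace_zero]
  have hPcVP : ∀ d, (Pc * V d) * P = 0 := fun d => by
    rw [← hρC, ← Matrix.mul_assoc, hPcVρ d, Matrix.zero_mul]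
  -- Step (ii): (1 - P) K ρss = 0
  have hPcKρ : (Pc * K) * ρss = 0 := by
    have h0 : Pc * lindblad H V ρss = 0 := by rw [hρL, Matrix.mul_zero]
    rw [hLeq ρss, Matrix.mul_sub, Matrix.mul_add, Matrix.mul_sum] at h0
    have e1 : ∑ d, Pc * (V d * ρss * (V d)ᴴ) = 0 := by
      refine Finset.sum_eq_zero fun d _ => ?_
      simp only [← Matrix.mul_assoc]
      rw [hPcVρ d, Matrix.zero_mul]
    have e2 : Pc * (ρss * Kᴴ) = 0 := by
      rw [← Matrix.mul_assoc, hPcρ, Matrix.zero_mul]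
    rw [e1, e2, add_zero, zero_sub, neg_eq_zero, ← Matrix.mul_assoc] at h0
    exact h0
  have hPcKP : (Pc * K) * P = 0 := by
    rw [← hρC, ← Matrix.mul_assoc, hPcKρ, Matrix.zero_mul]
  -- notation: W d = Pc V d, G = Pc K
  obtain ⟨W, hWdef⟩ : ∃ W' : ι → Matrix (Fin N) (Fin N) ℂ, W' = fun d => Pc * V d :=
    ⟨_, rfl⟩
  obtain ⟨G, hGdef⟩ : ∃ G' : Matrix (Fin N) (Fin N) ℂ, G' = Pc * K := ⟨_, rfl⟩
  have hWd : ∀ d, W d = Pc * V d := fun d => by rw [hWdef]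
  have hmulPc : ∀ X : Matrix (Fin N) (Fin N) ℂ, X * P = 0 → X * Pc = X := by
    intro X hX
    rw [hPcdef, Matrix.mul_sub, Matrix.mul_one, hX, sub_zero]
  have hWPc : ∀ d, W d * Pc = W d := fun d => by
    rw [hWd d]; exact hmulPc _ (hPcVP d)
  have hGPc : G * Pc = G := by
    rw [hGdef]; exact hmulPc _ hPcKP
  have hPcWH : ∀ d, Pc * (W d)ᴴ = (W d)ᴴ := fun d => by
    have := congrArg conjTranspose (hWPc d)
    rwa [conjTranspose_mul, hPcH] at this
  have hPcGH : Pc * Gᴴ = Gᴴ := by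
    have := congrArg conjTranspose hGPc
    rwa [conjTranspose_mul, hPcH] at this
  -- B
  obtain ⟨B, hBdef⟩ : ∃ B' : Matrix (Fin N) (Fin N) ℂ, B' = Pc * σ * Pc := ⟨_, rfl⟩
  have hBpsd : B.PosSemidef := by
    rw [hBdef]
    have := hσpsd.conjTranspose_mul_mul_same Pc
    rwa [hPcH] at this
  have hPcB : Pc * B = B := by
    rw [hBdef]; simp only [← Matrix.mul_assoc, hPcPc]
  have hBPc : B * Pc = B := by
    rw [hBdef]; simp only [Matrix.mul_assoc, hPcPc]
  -- Step (iii): the compressed steady-state equation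
  have hIII : (∑ d, W d * B * (W d)ᴴ) = G * B + B * Gᴴ := by
    have h0 : Pc * lindblad H V σ * Pc = 0 := by rw [hσL, Matrix.mul_zero, Matrix.zero_mul]
    rw [hLeq σ, Matrix.mul_sub, Matrix.sub_mul, Matrix.mul_add, Matrix.add_mul,
      Matrix.mul_sum, Matrix.sum_mul] at h0
    have e1 : ∀ d, Pc * (V d * σ * (V d)ᴴ) * Pc = W d * B * (W d)ᴴ := by
      intro d
      calc Pc * (V d * σ * (V d)ᴴ) * Pc = (Pc * V d) * σ * ((V d)ᴴ * Pc) := by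
            simp only [Matrix.mul_assoc]
        _ = (W d * Pc) * σ * (Pc * (W d)ᴴ) := by
            rw [hWPc d, hPcWH d, hWd d, conjTranspose_mul, hPcH, Matrix.mul_assoc]
        _ = W d * B * (W d)ᴴ := by
            rw [hBdef]
            simp only [Matrix.mul_assoc]
    have e2 : Pc * (K * σ) * Pc = G * B := by
      calc Pc * (K * σ) * Pc = (Pc * K) * (σ * Pc) := by simp only [Matrix.mul_assoc]
        _ = ((G * Pc) * σ) * Pc := by rw [hGPc, ← hGdef]; simp only [Matrix.mul_assoc]
        _ = G * B := by rw [hBdef]; simp only [Matrix.mul_assoc, hPcPc]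
    have hKHPc : Kᴴ * Pc = Gᴴ := by
      rw [hGdef, conjTranspose_mul, hPcH]
    have e3 : Pc * (σ * Kᴴ) * Pc = B * Gᴴ := by
      calc Pc * (σ * Kᴴ) * Pc = (Pc * σ) * (Kᴴ * Pc) := by simp only [Matrix.mul_assoc]
        _ = (Pc * σ) * (Pc * Gᴴ) := by rw [hKHPc, hPcGH]
        _ = B * Gᴴ := by rw [hBdef]; simp only [Matrix.mul_assoc, hPcGH]
    have h1 : ∑ d, Pc * (V d * σ * (V d)ᴴ) * Pc = ∑ d, W d * B * (W d)ᴴ :=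
      Finset.sum_congr rfl fun d _ => e1 d
    rw [h1, e2, e3] at h0
    rw [sub_eq_zero] at h0
    exact h0
  have hKHPc2 : Kᴴ * Pc = Gᴴ := by
    rw [hGdef, conjTranspose_mul, hPcH]
  -- Step (iv): P V_d B = 0
  have hKKH : K + Kᴴ = ∑ d, (V d)ᴴ * V d := by
    rw [hKdef]; exact LindbladAux.Kop_add_conjTranspose H V hH
  have hPplus : P + Pc = 1 := by rw [hPcdef]; abel
  have hsplit : ∀ d, ((P * V d)ᴴ * (P * V d)) + ((W d)ᴴ * (W d)) = (V d)ᴴ * V d := by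
    intro d
    rw [hWd d, conjTranspose_mul, conjTranspose_mul, hPH, hPcH]
    have h1 : ((V d)ᴴ * P) * (P * V d) = (V d)ᴴ * (P * V d) := by
      rw [Matrix.mul_assoc, ← Matrix.mul_assoc P P, hPP]
    have h2 : ((V d)ᴴ * Pc) * (Pc * V d) = (V d)ᴴ * (Pc * V d) := by
      rw [Matrix.mul_assoc, ← Matrix.mul_assoc Pc Pc, hPcPc]
    rw [h1, h2, ← Matrix.mul_add, ← Matrix.add_mul, hPplus, Matrix.one_mul]
  have t1 : (G * B).trace = (B * K).trace := by
    rw [hGdef, trace_mul_cycle, hBPc]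
  have t2 : (B * Gᴴ).trace = (B * Kᴴ).trace := by
    rw [← hKHPc2, ← Matrix.mul_assoc, trace_mul_cycle, hPcB]
  have t3 : ∑ d, (W d * B * (W d)ᴴ).trace = (B * K).trace + (B * Kᴴ).trace := by
    have := congrArg Matrix.trace hIII
    rwa [trace_sum, trace_add, t1, t2] at this
  have t4 : ∑ d, (((V d)ᴴ * V d) * B).trace = (B * K).trace + (B * Kᴴ).trace := by
    rw [← trace_add, ← Matrix.mul_add, hKKH, Matrix.mul_sum, trace_sum]
    exact Finset.sum_congr rfl fun d _ => trace_mul_comm _ _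
  have htr4 : ∑ d, ((P * V d) * B * (P * V d)ᴴ).trace = 0 := by
    have key : ∀ X : Matrix (Fin N) (Fin N) ℂ, (X * B * Xᴴ).trace = ((Xᴴ * X) * B).trace :=
      fun X => trace_mul_cycle X B Xᴴ
    have e : ∀ d, ((P * V d) * B * (P * V d)ᴴ).trace =
        (((V d)ᴴ * V d) * B).trace - (W d * B * (W d)ᴴ).trace := by
      intro d
      rw [key, key, ← hsplit d, Matrix.add_mul, trace_add]
      ring
    rw [Finset.sum_congr rfl fun d _ => e d, Finset.sum_sub_distrib, t3, t4, sub_self]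
  have hPVB : ∀ d, (P * V d) * B = 0 := LindbladAux.conj_eq_zero_of_sum hBpsd htr4
  -- Step (v): the support of B is invariant
  obtain ⟨Q, hQQ, hQH, hBQ, hQB, ⟨CB, hBCB⟩⟩ := LindbladAux.exists_projection hBpsd.1
  have hPcQ : Pc * Q = Q := by rw [← hBCB, ← Matrix.mul_assoc, hPcB]
  have hQPc : Q * Pc = Q := by
    have := congrArg conjTranspose hPcQ
    rwa [conjTranspose_mul, hPcH, hQH] at this
  have hQρ : Q * ρss = 0 := by
    rw [← hQPc, Matrix.mul_assoc, hPcρ, Matrix.mul_zero]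
  obtain ⟨Qc, hQcdef⟩ : ∃ q : Matrix (Fin N) (Fin N) ℂ, q = 1 - Q := ⟨_, rfl⟩
  have hQcH : Qcᴴ = Qc := by rw [hQcdef, conjTranspose_sub, conjTranspose_one, hQH]
  have hBQc : B * Qc = 0 := by rw [hQcdef, Matrix.mul_sub, Matrix.mul_one, hBQ, sub_self]
  have hQcB : Qc * B = 0 := by rw [hQcdef, Matrix.sub_mul, Matrix.one_mul, hQB, sub_self]
  have htr5 : ∑ d, ((Qc * W d) * B * (Qc * W d)ᴴ).trace = 0 := by
    have h1 : ∀ d, (Qc * W d) * B * (Qc * W d)ᴴ = Qc * (W d * B * (W d)ᴴ) * Qc := by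
      intro d
      rw [conjTranspose_mul, hQcH]
      simp only [Matrix.mul_assoc]
    calc ∑ d, ((Qc * W d) * B * (Qc * W d)ᴴ).trace
        = (Qc * (∑ d, W d * B * (W d)ᴴ) * Qc).trace := by
          rw [Matrix.mul_sum, Matrix.sum_mul, trace_sum]
          exact Finset.sum_congr rfl fun d _ => by rw [h1 d]
      _ = (Qc * (G * B + B * Gᴴ) * Qc).trace := by rw [hIII]
      _ = 0 := by
          rw [Matrix.mul_add, Matrix.add_mul]
          have z1 : Qc * (G * B) * Qc = 0 := by
            simp only [Matrix.mul_assoc]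
            rw [hBQc, Matrix.mul_zero, Matrix.mul_zero]
          have z2 : Qc * (B * Gᴴ) * Qc = 0 := by
            simp only [← Matrix.mul_assoc]
            rw [hQcB, Matrix.zero_mul, Matrix.zero_mul]
          rw [z1, z2, add_zero, trace_zero]
  have hQcWB : ∀ d, (Qc * W d) * B = 0 := LindbladAux.conj_eq_zero_of_sum hBpsd htr5
  have hWQ : ∀ d, W d * Q = Q * (W d * Q) := by
    intro d
    have h1 : (Qc * W d) * Q = 0 := by
      rw [← hBCB, ← Matrix.mul_assoc, hQcWB d, Matrix.zero_mul]
    have h2 : (Qc * W d) * Q = W d * Q - Q * (W d * Q) := by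
      rw [hQcdef]
      simp only [Matrix.sub_mul, Matrix.one_mul, Matrix.mul_assoc]
    rw [h2] at h1
    exact sub_eq_zero.mp h1
  have hPVQ : ∀ d, (P * V d) * Q = 0 := fun d => by
    rw [← hBCB, ← Matrix.mul_assoc, hPVB d, Matrix.zero_mul]
  have hVQ : ∀ d, V d * Q = Q * (W d * Q) := by
    intro d
    have hstep : V d * Q = (P * V d) * Q + (Pc * V d) * Q := by
      calc V d * Q = ((P + Pc) * V d) * Q := by rw [hPplus, Matrix.one_mul]
        _ = (P * V d) * Q + (Pc * V d) * Q := by rw [Matrix.add_mul, Matrix.add_mul]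
    rw [hstep, hPVQ d, zero_add, ← hWd d]
    exact hWQ d
  by_cases hBzero : B = 0
  · -- Case 1: the support of σ lies inside the support of ρss; use extremality
    have hPcσ : Pc * σ = 0 := by
      apply LindbladAux.mul_eq_zero_of_conj_eq_zero hσpsd
      rw [hPcH, ← hBdef, hBzero]
    have hσPc : σ * Pc = 0 := by
      have := congrArg conjTranspose hPcσ
      rwa [conjTranspose_mul, hPcH, hσpsd.1.eq, conjTranspose_zero] at this
    have h1P : P = 1 - Pc := by rw [hPcdef]; abel
    have hPσ : P * σ = σ := by
      rw [h1P, Matrix.sub_mul, Matrix.one_mul, hPcσ, sub_zero]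
    have hσP' : σ * P = σ := by
      rw [h1P, Matrix.mul_sub, Matrix.mul_one, hσPc, sub_zero]
    have hone : ((1 : Matrix (Fin N) (Fin N) ℂ) - σ).PosSemidef :=
      LindbladAux.one_sub_psd hσpsd hσtr
    have hPsP : (P * ((1 : Matrix (Fin N) (Fin N) ℂ) - σ) * P).PosSemidef := by
      have := hone.mul_mul_conjTranspose_same P
      rwa [hPH] at this
    have hPsP' : P * ((1 : Matrix (Fin N) (Fin N) ℂ) - σ) * P = P - σ := by
      rw [Matrix.mul_sub, Matrix.mul_one, Matrix.sub_mul, hPP, Matrix.mul_assoc, hσP', hPσ]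
    have hτ : (ρss - (a : ℂ) • σ).PosSemidef := by
      have h2 : ((a : ℂ) • (P - σ)).PosSemidef :=
        LindbladAux.smul_psd (hPsP' ▸ hPsP) ha0.le
      have h3 := hbd.add h2
      have heq : (ρss - (a : ℂ) • P) + (a : ℂ) • (P - σ) = ρss - (a : ℂ) • σ := by
        rw [smul_sub]; abel
      rwa [heq] at h3
    have ha1 : a < 1 := lt_of_le_of_lt ha2 (by norm_num)
    have hane : (1 - a : ℝ) ≠ 0 := by intro h; linarith [ha2]
    obtain ⟨ρ₂, hρ₂def⟩ : ∃ r : Matrix (Fin N) (Fin N) ℂ,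
        r = (((1 - a)⁻¹ : ℝ) : ℂ) • (ρss - (a : ℂ) • σ) := ⟨_, rfl⟩
    have hρ₂psd : ρ₂.PosSemidef := by
      rw [hρ₂def]
      exact LindbladAux.smul_psd hτ (inv_nonneg.mpr (by linarith))
    have hρ₂tr : ρ₂.trace = 1 := by
      rw [hρ₂def, trace_smul, trace_sub, trace_smul, hρtr, hσtr]
      simp only [smul_eq_mul, mul_one]
      rw [show (1 : ℂ) - (a : ℂ) = (((1 - a : ℝ)) : ℂ) by push_cast; ring,
        ← Complex.ofReal_mul, inv_mul_cancel₀ hane, Complex.ofReal_one]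
    have hρ₂L : lindblad H V ρ₂ = 0 := by
      rw [hρ₂def, LindbladAux.lindblad_smul, LindbladAux.lindblad_sub, hρL,
        LindbladAux.lindblad_smul, hσL, smul_zero, zero_sub, neg_zero, smul_zero]
    have hdecomp : ρss = a • σ + (1 - a) • ρ₂ := by
      rw [hρ₂def, LindbladAux.rsmul a, LindbladAux.rsmul (1 - a), smul_smul,
        show ((1 - a : ℝ) : ℂ) * (((1 - a)⁻¹ : ℝ) : ℂ) = 1 by
          rw [← Complex.ofReal_mul, mul_inv_cancel₀ hane, Complex.ofReal_one],
        one_smul]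
      abel
    exact (hext.2 a σ ρ₂ ha0 ha1 ⟨⟨hσpsd, hσtr⟩, hσL⟩ ⟨⟨hρ₂psd, hρ₂tr⟩, hρ₂L⟩ hdecomp).1
  · -- Case 2: the support of B is a nonzero invariant subspace orthogonal to supp ρss
    exfalso
    apply hno
    have hQ0 : Q ≠ 0 := fun h => hBzero (by rw [← hBQ, h, Matrix.mul_zero])
    refine ⟨matSupport Q, ?_, ?_, ?_⟩
    · -- nonzero
      obtain ⟨i, j, hij⟩ : ∃ i j, Q i j ≠ 0 := by
        by_contra hc
        push_neg at hc
        exact hQ0 (Matrix.ext fun i j => by rw [hc i j, Matrix.zero_apply])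
      intro hbot
      have hmem : Q *ᵥ Pi.single j 1 ∈ matSupport Q :=
        ⟨Pi.single j 1, by rw [Matrix.mulVecLin_apply]⟩
      rw [hbot, Submodule.mem_bot] at hmem
      have := congrFun hmem i
      rw [Matrix.mulVec_single] at this
      simp only [mul_one, Pi.zero_apply, MulOpposite.op_one, one_smul, Matrix.col_apply] at this
      exact hij this
    · -- orthogonal to the support of ρss
      rintro x ⟨u, rfl⟩ y ⟨w, rfl⟩
      rw [Matrix.mulVecLin_apply, Matrix.mulVecLin_apply, star_mulVec,
        Matrix.dotProduct_mulVec, Matrix.vecMul_vecMul, hQH, hQρ,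
        Matrix.vecMul_zero, zero_dotProduct]
    · -- invariant under every V d
      rintro d x ⟨u, rfl⟩
      refine ⟨(W d * Q) *ᵥ u, ?_⟩
      rw [Matrix.mulVecLin_apply, Matrix.mulVecLin_apply, Matrix.mulVec_mulVec,
        Matrix.mulVec_mulVec, ← hVQ d]
end
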